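/- For every z ∈ ℂ∖(−∞,0], the segment from 1 to z lies in ℂ∖(−∞,0] and (z−1)·∫₀¹ logΓ(1 + t(z−1)) dt = ((z−1)/2)·ln(2π) − z(z−1)/2 + (z−1)·logΓ(z) − logG(1+(z−1)), where logΓ is the principal branch of log-Gamma and logG is the logarithm of the Barnes G-function defined in the context. -/

import Mathlib

open Complex Filter

noncomputable section

/-- Principal branch of log-Gamma on `ℂ ∖ (-∞,0]`. -/
def logGammaP (z : ℂ) : ℂ :=
  -(Real.eulerMascheroniConstant : ℂ) * z - Complex.log z +
    ∑' k : ℕ, (z / ((k : ℂ) + 1) - Complex.log (1 + z / ((k : ℂ) + 1)))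

/-- Complex logarithm of the Barnes `G`-function at `1 + w`, for `w ∈ ℂ ∖ (-∞,-1]`. -/
def clogBarnesG1p (w : ℂ) : ℂ :=
  w / 2 * (Real.log (2 * Real.pi) : ℂ) -
    (w + w ^ 2 * (1 + (Real.eulerMascheroniConstant : ℂ))) / 2 +
    ∑' k : ℕ, (((k : ℂ) + 1) * Complex.log (1 + w / ((k : ℂ) + 1)) - w + w ^ 2 / (2 * ((k : ℂ) + 1)))

namespace LogGammaAux

/-- The series appearing in the derivative of `logGammaP`. -/
def S1 (z : ℂ) : ℂ := ∑' n : ℕ, (1 / ((n : ℂ) + 1) - 1 / ((n : ℂ) + 1 + z))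

lemma natC_ne (n : ℕ) : ((n : ℂ) + 1) ≠ 0 :=
  Nat.cast_add_one_ne_zero n

lemma norm_natC (n : ℕ) : ‖((n : ℂ) + 1)‖ = (n : ℝ) + 1 := by
  have : ((n : ℂ) + 1) = (((n : ℝ) + 1 : ℝ) : ℂ) := by push_cast; ring
  rw [this, Complex.norm_real, Real.norm_eq_abs, abs_of_pos (by positivity)]

lemma aux_slit {z : ℂ} (hz : z ∈ Complex.slitPlane) (n : ℕ) :
    1 + z / ((n : ℂ) + 1) ∈ Complex.slitPlane := by
  have hc : ((n : ℂ) + 1) = (((n : ℝ) + 1 : ℝ) : ℂ) := by push_cast; ring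
  have hn : (0 : ℝ) < (n : ℝ) + 1 := by positivity
  rcases Complex.mem_slitPlane_iff.mp hz with h | h
  · refine Complex.mem_slitPlane_iff.mpr (Or.inl ?_)
    rw [hc, Complex.add_re, Complex.one_re, Complex.div_ofReal_re]
    positivity
  · refine Complex.mem_slitPlane_iff.mpr (Or.inr ?_)
    simp only [hc, Complex.add_im, Complex.one_im, Complex.div_ofReal_im, zero_add]
    exact div_ne_zero h (by positivity)

lemma aux_slit' {x : ℂ} (hx : 1 + x ∈ Complex.slitPlane) (n : ℕ) :
    1 + x / ((n : ℂ) + 1) ∈ Complex.slitPlane := by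
  have h := starConvex_one_slitPlane.add_smul_mem hx
    (t := 1 / ((n : ℝ) + 1)) (by positivity)
    (by rw [div_le_one (by positivity)]; exact le_add_of_nonneg_left (Nat.cast_nonneg n))
  have hc : (1 / ((n : ℝ) + 1) : ℝ) • x = x / ((n : ℂ) + 1) := by
    rw [Complex.real_smul]
    push_cast
    ring
  rwa [hc] at h

lemma one_add_div_eq (n : ℕ) (x : ℂ) :
    1 + x / ((n : ℂ) + 1) = ((n : ℂ) + 1 + x) / ((n : ℂ) + 1) := by
  field_simp [natC_ne n]

lemma denom_ne {x : ℂ} (n : ℕ) (h : 1 + x / ((n : ℂ) + 1) ∈ Complex.slitPlane) :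
    (n : ℂ) + 1 + x ≠ 0 := by
  intro h0
  apply Complex.slitPlane_ne_zero h
  rw [one_add_div_eq, h0, zero_div]

lemma summable_aux (C : ℝ) : Summable (fun n : ℕ => C / ((n : ℝ) + 1) ^ 2) := by
  have h : Summable (fun n : ℕ => (1 : ℝ) / ((n : ℕ) : ℝ) ^ 2) :=
    Real.summable_one_div_nat_pow.mpr one_lt_two
  have h2 : Summable (fun n : ℕ => (1 : ℝ) / ((n : ℝ) + 1) ^ 2) := by
    have h3 := (summable_nat_add_iff (f := fun n : ℕ => (1 : ℝ) / ((n : ℕ) : ℝ) ^ 2) 1).mpr h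
    refine h3.congr fun n => ?_
    push_cast
    ring
  refine (h2.mul_left C).congr fun n => ?_
  rw [mul_one_div]

lemma key_ineq {R d : ℝ} {x : ℂ} (hR : 0 < R) (hd : 0 < d) (hx : ‖x‖ ≤ R) (n : ℕ)
    (hden : d ≤ ‖(n : ℂ) + 1 + x‖) :
    ‖x‖ / (((n : ℝ) + 1) * ‖(n : ℂ) + 1 + x‖) ≤ R * (2 + 2 * R / d) / ((n : ℝ) + 1) ^ 2 := by
  set c := ‖(n : ℂ) + 1 + x‖ with hc
  have hc0 : 0 < c := lt_of_lt_of_le hd hden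
  have htri : (n : ℝ) + 1 - R ≤ c := by
    have h1 : ‖((n : ℂ) + 1)‖ - ‖-x‖ ≤ ‖((n : ℂ) + 1) - -x‖ := norm_sub_norm_le _ _
    rw [norm_natC, sub_neg_eq_add, norm_neg] at h1
    have := norm_nonneg x
    linarith
  have h1 : 2 * R ≤ 2 * R / d * c := by
    rw [div_mul_eq_mul_div, le_div_iff₀ hd]
    nlinarith [mul_le_mul_of_nonneg_left hden (by positivity : (0:ℝ) ≤ 2 * R)]
  have hkey : (n : ℝ) + 1 ≤ (2 + 2 * R / d) * c := by
    have hexp : (2 + 2 * R / d) * c = 2 * c + 2 * R / d * c := by ring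
    rw [hexp]
    have := Nat.cast_nonneg (α := ℝ) n
    linarith
  rw [div_le_div_iff₀ (by positivity) (by positivity)]
  have hn1 : (0 : ℝ) < (n : ℝ) + 1 := by positivity
  calc ‖x‖ * ((n : ℝ) + 1) ^ 2 ≤ R * ((n : ℝ) + 1) ^ 2 := by gcongr
    _ = R * (((n : ℝ) + 1) * ((n : ℝ) + 1)) := by ring
    _ ≤ R * (((n : ℝ) + 1) * ((2 + 2 * R / d) * c)) := by gcongr
    _ = R * (2 + 2 * R / d) * (((n : ℝ) + 1) * c) := by ring

lemma hasDerivAt_fterm (n : ℕ) {x : ℂ} (hs : 1 + x / ((n : ℂ) + 1) ∈ Complex.slitPlane) :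
    HasDerivAt (fun y : ℂ => y / ((n : ℂ) + 1) - Complex.log (1 + y / ((n : ℂ) + 1)))
      (1 / ((n : ℂ) + 1) - 1 / ((n : ℂ) + 1 + x)) x := by
  have hne := natC_ne n
  have hne2 := denom_ne n hs
  have hne3 := Complex.slitPlane_ne_zero hs
  have hlog : HasDerivAt (fun y : ℂ => Complex.log (1 + y / ((n : ℂ) + 1)))
      ((1 + x / ((n : ℂ) + 1))⁻¹ * (((n : ℂ) + 1)⁻¹)) x := by
    have hin : HasDerivAt (fun y : ℂ => 1 + y / ((n : ℂ) + 1)) (((n : ℂ) + 1)⁻¹) x := by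
      simpa [div_eq_mul_inv] using ((hasDerivAt_id x).div_const ((n : ℂ) + 1)).const_add 1
    exact (Complex.hasDerivAt_log hs).comp x hin
  have hid : HasDerivAt (fun y : ℂ => y / ((n : ℂ) + 1)) (((n : ℂ) + 1)⁻¹) x := by
    simpa using (hasDerivAt_id x).div_const ((n : ℂ) + 1)
  refine (hid.sub hlog).congr_deriv ?_
  symm
  rw [one_add_div_eq, inv_div, div_mul_eq_mul_div]
  rw [mul_comm ((n:ℂ)+1) ((n:ℂ)+1)⁻¹, inv_mul_cancel₀ hne]
  simp [one_div]


lemma hasDerivAt_gterm (n : ℕ) {x : ℂ} (hs : 1 + x / ((n : ℂ) + 1) ∈ Complex.slitPlane) :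
    HasDerivAt (fun y : ℂ =>
        ((n : ℂ) + 1) * Complex.log (1 + y / ((n : ℂ) + 1)) - y + y ^ 2 / (2 * ((n : ℂ) + 1)))
      (x ^ 2 / (((n : ℂ) + 1) * ((n : ℂ) + 1 + x))) x := by
  have hne := natC_ne n
  have hne2 := denom_ne n hs
  have hne3 := Complex.slitPlane_ne_zero hs
  have hlog : HasDerivAt (fun y : ℂ => Complex.log (1 + y / ((n : ℂ) + 1)))
      ((1 + x / ((n : ℂ) + 1))⁻¹ * (((n : ℂ) + 1)⁻¹)) x := by
    have hin : HasDerivAt (fun y : ℂ => 1 + y / ((n : ℂ) + 1)) (((n : ℂ) + 1)⁻¹) x := by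
      simpa [div_eq_mul_inv] using ((hasDerivAt_id x).div_const ((n : ℂ) + 1)).const_add 1
    exact (Complex.hasDerivAt_log hs).comp x hin
  have hsq : HasDerivAt (fun y : ℂ => y ^ 2 / (2 * ((n : ℂ) + 1)))
      (2 * x / (2 * ((n : ℂ) + 1))) x := by
    simpa using (hasDerivAt_pow 2 x).div_const (2 * ((n : ℂ) + 1))
  refine (((hlog.const_mul ((n : ℂ) + 1)).sub (hasDerivAt_id x)).add hsq).congr_deriv ?_
  symm
  rw [one_add_div_eq, inv_div]
  field_simp
  ring

lemma norm_fderiv_eq (n : ℕ) {x : ℂ} (hne2 : (n : ℂ) + 1 + x ≠ 0) :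
    ‖1 / ((n : ℂ) + 1) - 1 / ((n : ℂ) + 1 + x)‖
      = ‖x‖ / (((n : ℝ) + 1) * ‖(n : ℂ) + 1 + x‖) := by
  have hne := natC_ne n
  have h : 1 / ((n : ℂ) + 1) - 1 / ((n : ℂ) + 1 + x) = x / (((n : ℂ) + 1) * ((n : ℂ) + 1 + x)) := by
    field_simp
    ring
  rw [h, norm_div, norm_mul, norm_natC]

end LogGammaAux

namespace LogGammaAux

lemma hinv_le {t : ℝ} (ht0 : 0 ≤ t) (ht : t ≤ 1/2) : (1 - t)⁻¹ ≤ 2 := by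
  have h1 : (1:ℝ)/2 ≤ 1 - t := by linarith
  have := inv_anti₀ (by norm_num : (0:ℝ) < 1/2) h1
  simpa using this

lemma summable_fseries (z : ℂ) :
    Summable (fun n : ℕ => z / ((n : ℂ) + 1) - Complex.log (1 + z / ((n : ℂ) + 1))) := by
  refine Summable.of_norm_bounded_eventually_nat (g := fun n => ‖z‖ ^ 2 / ((n : ℝ) + 1) ^ 2)
    (summable_aux _) ?_
  filter_upwards [eventually_ge_atTop ⌈2 * ‖z‖⌉₊] with n hn
  have hn2 : 2 * ‖z‖ ≤ (n : ℝ) + 1 := by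
    have h1 := Nat.le_ceil (2 * ‖z‖)
    have h2 : ((⌈2 * ‖z‖⌉₊ : ℕ) : ℝ) ≤ (n : ℝ) := by exact_mod_cast hn
    linarith
  have hupos : (0 : ℝ) < (n : ℝ) + 1 := by positivity
  have hu1 : ‖z / ((n : ℂ) + 1)‖ = ‖z‖ / ((n : ℝ) + 1) := by rw [norm_div, norm_natC]
  have hu : ‖z / ((n : ℂ) + 1)‖ ≤ 1 / 2 := by
    rw [hu1, div_le_div_iff₀ hupos (by norm_num)]
    linarith
  have hb := Complex.norm_log_one_add_sub_self_le (lt_of_le_of_lt hu (by norm_num))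
  have hinv := hinv_le (norm_nonneg _) hu
  calc ‖z / ((n : ℂ) + 1) - Complex.log (1 + z / ((n : ℂ) + 1))‖
      = ‖Complex.log (1 + z / ((n : ℂ) + 1)) - z / ((n : ℂ) + 1)‖ := norm_sub_rev _ _
    _ ≤ ‖z / ((n : ℂ) + 1)‖ ^ 2 * (1 - ‖z / ((n : ℂ) + 1)‖)⁻¹ / 2 := hb
    _ ≤ ‖z / ((n : ℂ) + 1)‖ ^ 2 * 2 / 2 := by gcongr
    _ = (‖z‖ / ((n : ℝ) + 1)) ^ 2 := by rw [hu1]; ring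
    _ = ‖z‖ ^ 2 / ((n : ℝ) + 1) ^ 2 := div_pow _ _ _

lemma logTaylor_three (u : ℂ) : Complex.logTaylor 3 u = u - u ^ 2 / 2 := by
  simp [Complex.logTaylor_succ, Complex.logTaylor_zero]
  norm_num
  ring

lemma summable_gseries (w : ℂ) :
    Summable (fun n : ℕ => ((n : ℂ) + 1) * Complex.log (1 + w / ((n : ℂ) + 1)) - w
      + w ^ 2 / (2 * ((n : ℂ) + 1))) := by
  refine Summable.of_norm_bounded_eventually_nat (g := fun n => ‖w‖ ^ 3 / ((n : ℝ) + 1) ^ 2)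
    (summable_aux _) ?_
  filter_upwards [eventually_ge_atTop ⌈2 * ‖w‖⌉₊] with n hn
  have hn2 : 2 * ‖w‖ ≤ (n : ℝ) + 1 := by
    have h1 := Nat.le_ceil (2 * ‖w‖)
    have h2 : ((⌈2 * ‖w‖⌉₊ : ℕ) : ℝ) ≤ (n : ℝ) := by exact_mod_cast hn
    linarith
  have hupos : (0 : ℝ) < (n : ℝ) + 1 := by positivity
  have hu1 : ‖w / ((n : ℂ) + 1)‖ = ‖w‖ / ((n : ℝ) + 1) := by rw [norm_div, norm_natC]
  have hu : ‖w / ((n : ℂ) + 1)‖ ≤ 1 / 2 := by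
    rw [hu1, div_le_div_iff₀ hupos (by norm_num)]
    linarith
  have hterm : ((n : ℂ) + 1) * Complex.log (1 + w / ((n : ℂ) + 1)) - w
      + w ^ 2 / (2 * ((n : ℂ) + 1))
      = ((n : ℂ) + 1) * (Complex.log (1 + w / ((n : ℂ) + 1))
          - Complex.logTaylor 3 (w / ((n : ℂ) + 1))) := by
    have h1n : (1 : ℂ) + (n : ℂ) ≠ 0 := by rw [add_comm]; exact natC_ne n
    rw [logTaylor_three]
    field_simp [natC_ne n, h1n]
    ring
  have hb := Complex.norm_log_sub_logTaylor_le 2 (lt_of_le_of_lt hu (by norm_num))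
  have hinv := hinv_le (norm_nonneg (w / ((n : ℂ) + 1))) hu
  calc ‖((n : ℂ) + 1) * Complex.log (1 + w / ((n : ℂ) + 1)) - w + w ^ 2 / (2 * ((n : ℂ) + 1))‖
      = ((n : ℝ) + 1) * ‖Complex.log (1 + w / ((n : ℂ) + 1))
          - Complex.logTaylor 3 (w / ((n : ℂ) + 1))‖ := by
        rw [hterm, norm_mul, norm_natC]
    _ ≤ ((n : ℝ) + 1) * (‖w / ((n : ℂ) + 1)‖ ^ 3 * (1 - ‖w / ((n : ℂ) + 1)‖)⁻¹ / 3) := by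
        refine mul_le_mul_of_nonneg_left ?_ (by positivity)
        refine le_trans (le_of_eq ?_) (hb.trans (le_of_eq ?_)) <;> norm_num
    _ ≤ ((n : ℝ) + 1) * (‖w / ((n : ℂ) + 1)‖ ^ 3 * 2 / 3) := by gcongr
    _ = 2 / 3 * (‖w‖ ^ 3 / ((n : ℝ) + 1) ^ 2) := by
        rw [hu1, div_pow]
        field_simp [hupos.ne']
    _ ≤ ‖w‖ ^ 3 / ((n : ℝ) + 1) ^ 2 := by
        have h0 : (0:ℝ) ≤ ‖w‖ ^ 3 / ((n : ℝ) + 1) ^ 2 := by positivity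
        linarith

lemma summable_S1 (z : ℂ) :
    Summable (fun n : ℕ => 1 / ((n : ℂ) + 1) - 1 / ((n : ℂ) + 1 + z)) := by
  refine Summable.of_norm_bounded_eventually_nat (g := fun n => 2 * ‖z‖ / ((n : ℝ) + 1) ^ 2)
    (summable_aux _) ?_
  filter_upwards [eventually_ge_atTop ⌈2 * ‖z‖⌉₊] with n hn
  have hn2 : 2 * ‖z‖ ≤ (n : ℝ) + 1 := by
    have h1 := Nat.le_ceil (2 * ‖z‖)
    have h2 : ((⌈2 * ‖z‖⌉₊ : ℕ) : ℝ) ≤ (n : ℝ) := by exact_mod_cast hn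
    linarith
  have hn1 : (0 : ℝ) < (n : ℝ) + 1 := by positivity
  have htri : (n : ℝ) + 1 - ‖z‖ ≤ ‖(n : ℂ) + 1 + z‖ := by
    have h1 := norm_sub_norm_le ((n : ℂ) + 1) (-z)
    rw [norm_natC, sub_neg_eq_add, norm_neg] at h1
    exact h1
  have hden : ((n : ℝ) + 1) / 2 ≤ ‖(n : ℂ) + 1 + z‖ := by
    have : ‖z‖ ≤ ((n : ℝ) + 1) / 2 := by linarith
    linarith
  have hne2 : ((n : ℂ) + 1 + z) ≠ 0 := by
    intro h0
    rw [h0, norm_zero] at hden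
    linarith
  rw [norm_fderiv_eq n hne2]
  calc ‖z‖ / (((n : ℝ) + 1) * ‖(n : ℂ) + 1 + z‖)
      ≤ ‖z‖ / (((n : ℝ) + 1) * (((n : ℝ) + 1) / 2)) := by
        gcongr
        all_goals first
          | positivity
          | exact hden
          | exact norm_nonneg z
    _ = 2 * ‖z‖ / ((n : ℝ) + 1) ^ 2 := by
        field_simp [hn1.ne']

end LogGammaAux

namespace LogGammaAux

lemma tendsto_cinv (w : ℂ) :
    Tendsto (fun N : ℕ => 1 / ((N : ℂ) + 1 + w)) atTop (nhds 0) := by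
  rw [tendsto_zero_iff_norm_tendsto_zero]
  have h1 : Tendsto (fun N : ℕ => (N : ℝ) + (1 - ‖w‖)) atTop atTop :=
    tendsto_atTop_add_const_right _ _ tendsto_natCast_atTop_atTop
  have h2 : Tendsto (fun N : ℕ => ‖(N : ℂ) + 1 + w‖) atTop atTop := by
    refine tendsto_atTop_mono (fun N => ?_) h1
    have h3 := norm_sub_norm_le ((N : ℂ) + 1) (-w)
    rw [norm_natC, sub_neg_eq_add, norm_neg] at h3
    linarith
  refine h2.inv_tendsto_atTop.congr fun N => ?_
  simp [Pi.inv_apply, norm_div]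

lemma S1_succ (w : ℂ) : S1 (w + 1) = S1 w + 1 / (1 + w) := by
  have ha := summable_S1 (w + 1)
  have hb := summable_S1 w
  have hkey : ∑' n : ℕ, ((1 / ((n : ℂ) + 1) - 1 / ((n : ℂ) + 1 + (w + 1)))
      - (1 / ((n : ℂ) + 1) - 1 / ((n : ℂ) + 1 + w))) = 1 / (1 + w) := by
    set c : ℕ → ℂ := fun n => 1 / ((n : ℂ) + 1 + w) with hc
    have heq : ∀ n : ℕ, (1 / ((n : ℂ) + 1) - 1 / ((n : ℂ) + 1 + (w + 1)))
        - (1 / ((n : ℂ) + 1) - 1 / ((n : ℂ) + 1 + w)) = c n - c (n + 1) := by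
      intro n
      simp only [hc]
      push_cast
      ring
    have htend := (ha.sub hb).hasSum.tendsto_sum_nat
    have hps : ∀ N : ℕ, ∑ n ∈ Finset.range N, ((1 / ((n : ℂ) + 1) - 1 / ((n : ℂ) + 1 + (w + 1)))
        - (1 / ((n : ℂ) + 1) - 1 / ((n : ℂ) + 1 + w))) = c 0 - c N := by
      intro N
      rw [Finset.sum_congr rfl (fun n _ => heq n), Finset.sum_range_sub' c]
    have htend2 : Tendsto (fun N : ℕ => c 0 - c N) atTop
        (nhds (∑' n : ℕ, ((1 / ((n : ℂ) + 1) - 1 / ((n : ℂ) + 1 + (w + 1)))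
          - (1 / ((n : ℂ) + 1) - 1 / ((n : ℂ) + 1 + w))))) := by
      refine htend.congr fun N => hps N
    have htend3 : Tendsto (fun N : ℕ => c 0 - c N) atTop (nhds (c 0 - 0)) :=
      tendsto_const_nhds.sub (tendsto_cinv w)
    have := tendsto_nhds_unique htend2 htend3
    rw [this]
    simp [hc]
  have hsub := Summable.tsum_sub ha hb
  rw [hsub] at hkey
  have : S1 (w + 1) - S1 w = 1 / (1 + w) := hkey
  linear_combination this

end LogGammaAux

namespace LogGammaAux

lemma ball_setup {z : ℂ} {Q : Set ℂ} (hQc : IsClosed Q) (hQne : Q.Nonempty) (hzQ : z ∉ Q) :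
    ∃ r : ℝ, 0 < r ∧ (∀ x ∈ Metric.ball z r, ∀ p ∈ Q, r ≤ dist x p) := by
  have hδ : 0 < Metric.infDist z Q := (hQc.notMem_iff_infDist_pos hQne).mp hzQ
  refine ⟨Metric.infDist z Q / 2, by positivity, ?_⟩
  intro x hx p hp
  have h1 : Metric.infDist z Q ≤ Metric.infDist x Q + dist z x :=
    Metric.infDist_le_infDist_add_dist
  have h2 : Metric.infDist x Q ≤ dist x p := Metric.infDist_le_dist_of_mem hp
  have h3 : dist z x < Metric.infDist z Q / 2 := by
    rw [dist_comm]; exact Metric.mem_ball.mp hx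
  linarith

lemma neg_natC_not_slit (n : ℕ) : -((n : ℂ) + 1) ∉ Complex.slitPlane := by
  rw [Complex.mem_slitPlane_iff]
  push_neg
  constructor
  · simp only [Complex.neg_re, Complex.add_re, Complex.natCast_re, Complex.one_re]
    have : (0:ℝ) ≤ (n:ℝ) := Nat.cast_nonneg n
    linarith
  · simp [Complex.neg_im, Complex.add_im]

lemma hasDerivAt_sum_f {z : ℂ} (hz : z ∈ Complex.slitPlane) :
    HasDerivAt (fun y : ℂ => ∑' n : ℕ, (y / ((n : ℂ) + 1) - Complex.log (1 + y / ((n : ℂ) + 1))))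
      (S1 z) z := by
  obtain ⟨r, hr0, hball⟩ := ball_setup (Q := Complex.slitPlaneᶜ)
    Complex.isOpen_slitPlane.isClosed_compl
    ⟨0, by simp [Complex.mem_slitPlane_iff]⟩ (by simpa using hz)
  set R := ‖z‖ + r with hR
  have hR0 : 0 < R := by positivity
  have hmem : ∀ x ∈ Metric.ball z r, x ∈ Complex.slitPlane := by
    intro x hx
    by_contra hmemx
    have := hball x hx x (by simpa using hmemx)
    simp only [dist_self] at this
    linarith
  have hlow : ∀ x ∈ Metric.ball z r, ∀ n : ℕ, r ≤ ‖(n : ℂ) + 1 + x‖ := by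
    intro x hx n
    have hp : -((n : ℂ) + 1) ∈ Complex.slitPlaneᶜ := by
      simpa using neg_natC_not_slit n
    have := hball x hx _ hp
    rwa [dist_eq_norm, sub_neg_eq_add, add_comm] at this
  have hnormx : ∀ x ∈ Metric.ball z r, ‖x‖ ≤ R := by
    intro x hx
    have h1 : dist x z < r := Metric.mem_ball.mp hx
    have h2 : ‖x‖ - ‖z‖ ≤ ‖x - z‖ := norm_sub_norm_le x z
    rw [← dist_eq_norm] at h2
    rw [hR]; linarith
  exact hasDerivAt_tsum_of_isPreconnected
    (u := fun n : ℕ => R * (2 + 2 * R / r) / ((n : ℝ) + 1) ^ 2)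
    (g := fun (n : ℕ) (y : ℂ) => y / ((n : ℂ) + 1) - Complex.log (1 + y / ((n : ℂ) + 1)))
    (g' := fun (n : ℕ) (x : ℂ) => 1 / ((n : ℂ) + 1) - 1 / ((n : ℂ) + 1 + x))
    (summable_aux _) Metric.isOpen_ball (convex_ball z r).isPreconnected
    (fun n x hx => hasDerivAt_fterm n (aux_slit (hmem x hx) n))
    (fun n x hx => by
      have hne2 : (n : ℂ) + 1 + x ≠ 0 := by
        intro h0
        have := hlow x hx n
        rw [h0, norm_zero] at this
        linarith
      rw [norm_fderiv_eq n hne2]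
      exact key_ineq hR0 hr0 (hnormx x hx) n (hlow x hx n))
    (Metric.mem_ball_self hr0) (summable_fseries z) (Metric.mem_ball_self hr0)

lemma hasDerivAt_sum_g {w : ℂ} (hw : 1 + w ∈ Complex.slitPlane) :
    HasDerivAt (fun y : ℂ => ∑' n : ℕ, (((n : ℂ) + 1) * Complex.log (1 + y / ((n : ℂ) + 1)) - y
        + y ^ 2 / (2 * ((n : ℂ) + 1))))
      (∑' n : ℕ, w ^ 2 / (((n : ℂ) + 1) * ((n : ℂ) + 1 + w))) w := by
  obtain ⟨r, hr0, hball⟩ := ball_setup (Q := {y : ℂ | 1 + y ∈ Complex.slitPlane}ᶜ)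
    (Complex.isOpen_slitPlane.preimage (continuous_const.add continuous_id)).isClosed_compl
    ⟨-1, by simp [Complex.mem_slitPlane_iff]⟩ (by simpa using hw)
  set R := ‖w‖ + r with hR
  have hR0 : 0 < R := by positivity
  have hmem : ∀ x ∈ Metric.ball w r, 1 + x ∈ Complex.slitPlane := by
    intro x hx
    by_contra hmemx
    have := hball x hx x (by simpa using hmemx)
    simp only [dist_self] at this
    linarith
  have hlow : ∀ x ∈ Metric.ball w r, ∀ n : ℕ, r ≤ ‖(n : ℂ) + 1 + x‖ := by
    intro x hx n
    have hp : -((n : ℂ) + 1) ∈ {y : ℂ | 1 + y ∈ Complex.slitPlane}ᶜ := by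
      simp only [Set.mem_compl_iff, Set.mem_setOf_eq]
      have : (1 : ℂ) + -((n : ℂ) + 1) = -(n : ℂ) := by ring
      rw [this, Complex.mem_slitPlane_iff]
      push_neg
      constructor
      · simp only [Complex.neg_re, Complex.natCast_re]
        have : (0:ℝ) ≤ (n:ℝ) := Nat.cast_nonneg n
        linarith
      · simp
    have := hball x hx _ hp
    rwa [dist_eq_norm, sub_neg_eq_add, add_comm] at this
  have hnormx : ∀ x ∈ Metric.ball w r, ‖x‖ ≤ R := by
    intro x hx
    have h1 : dist x w < r := Metric.mem_ball.mp hx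
    have h2 : ‖x‖ - ‖w‖ ≤ ‖x - w‖ := norm_sub_norm_le x w
    rw [← dist_eq_norm] at h2
    rw [hR]; linarith
  exact hasDerivAt_tsum_of_isPreconnected
    (u := fun n : ℕ => R * (R * (2 + 2 * R / r)) / ((n : ℝ) + 1) ^ 2)
    (g := fun (n : ℕ) (y : ℂ) => ((n : ℂ) + 1) * Complex.log (1 + y / ((n : ℂ) + 1)) - y
        + y ^ 2 / (2 * ((n : ℂ) + 1)))
    (g' := fun (n : ℕ) (x : ℂ) => x ^ 2 / (((n : ℂ) + 1) * ((n : ℂ) + 1 + x)))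
    (summable_aux _) Metric.isOpen_ball (convex_ball w r).isPreconnected
    (fun n x hx => hasDerivAt_gterm n (aux_slit' (hmem x hx) n))
    (fun n x hx => by
      have hxR := hnormx x hx
      have hlo := hlow x hx n
      have hkey := key_ineq hR0 hr0 hxR n hlo
      rw [norm_div, norm_mul, norm_natC, norm_pow]
      calc ‖x‖ ^ 2 / (((n : ℝ) + 1) * ‖(n : ℂ) + 1 + x‖)
          = ‖x‖ * (‖x‖ / (((n : ℝ) + 1) * ‖(n : ℂ) + 1 + x‖)) := by ring
        _ ≤ R * (R * (2 + 2 * R / r) / ((n : ℝ) + 1) ^ 2) :=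
            mul_le_mul hxR hkey (by positivity) hR0.le
        _ = R * (R * (2 + 2 * R / r)) / ((n : ℝ) + 1) ^ 2 := by ring)
    (Metric.mem_ball_self hr0) (summable_gseries w) (Metric.mem_ball_self hr0)

end LogGammaAux

namespace LogGammaAux

theorem hasDerivAt_logGammaP {z : ℂ} (hz : z ∈ Complex.slitPlane) :
    HasDerivAt logGammaP (-(Real.eulerMascheroniConstant : ℂ) - z⁻¹ + S1 z) z := by
  have h1 : HasDerivAt (fun y : ℂ => -(Real.eulerMascheroniConstant : ℂ) * y)
      (-(Real.eulerMascheroniConstant : ℂ)) z := by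
    simpa using (hasDerivAt_id z).const_mul (-(Real.eulerMascheroniConstant : ℂ))
  have h2 := Complex.hasDerivAt_log hz
  have h3 := hasDerivAt_sum_f hz
  exact ((h1.sub h2).add h3 :)

theorem hasDerivAt_clogBarnes {w : ℂ} (hw : 1 + w ∈ Complex.slitPlane) :
    HasDerivAt clogBarnesG1p
      ((Real.log (2 * Real.pi) : ℂ) / 2
        - (1 + 2 * w * (1 + (Real.eulerMascheroniConstant : ℂ))) / 2 + w * S1 w) w := by
  have c1 : HasDerivAt (fun y : ℂ => y / 2 * (Real.log (2 * Real.pi) : ℂ))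
      ((1 : ℂ) / 2 * (Real.log (2 * Real.pi) : ℂ)) w :=
    ((hasDerivAt_id w).div_const 2).mul_const _
  have c2 : HasDerivAt
      (fun y : ℂ => (y + y ^ 2 * (1 + (Real.eulerMascheroniConstant : ℂ))) / 2)
      ((1 + ((2 : ℕ) : ℂ) * w ^ 1 * (1 + (Real.eulerMascheroniConstant : ℂ))) / 2) w :=
    ((hasDerivAt_id w).add ((hasDerivAt_pow 2 w).mul_const _)).div_const 2
  have c3 := hasDerivAt_sum_g hw
  have htsum : ∑' n : ℕ, w ^ 2 / (((n : ℂ) + 1) * ((n : ℂ) + 1 + w)) = w * S1 w := by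
    have hcong : ∀ n : ℕ, w ^ 2 / (((n : ℂ) + 1) * ((n : ℂ) + 1 + w))
        = w * (1 / ((n : ℂ) + 1) - 1 / ((n : ℂ) + 1 + w)) := by
      intro n
      have hne2 : (n : ℂ) + 1 + w ≠ 0 := denom_ne n (aux_slit' hw n)
      field_simp [natC_ne n]
      ring
    rw [tsum_congr hcong, tsum_mul_left]
    rfl
  have H := (c1.sub c2).add c3
  have : HasDerivAt clogBarnesG1p
      ((1 : ℂ) / 2 * (Real.log (2 * Real.pi) : ℂ)
        - (1 + ((2 : ℕ) : ℂ) * w ^ 1 * (1 + (Real.eulerMascheroniConstant : ℂ))) / 2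
        + ∑' n : ℕ, w ^ 2 / (((n : ℂ) + 1) * ((n : ℂ) + 1 + w))) w := H
  rw [htsum] at this
  convert this using 1
  push_cast
  ring

def Fa (y : ℂ) : ℂ :=
  (y - 1) / 2 * (Real.log (2 * Real.pi) : ℂ) - y * (y - 1) / 2
    + (y - 1) * logGammaP y - clogBarnesG1p (y - 1)

theorem hasDerivAt_Fa {z : ℂ} (hz : z ∈ Complex.slitPlane) :
    HasDerivAt Fa (logGammaP z) z := by
  have hw : 1 + (z - 1) ∈ Complex.slitPlane := by
    have e : (1 : ℂ) + (z - 1) = z := by ring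
    rwa [e]
  have h1 := hasDerivAt_logGammaP hz
  have h2 := hasDerivAt_clogBarnes hw
  have hS : S1 z = S1 (z - 1) + 1 / z := by
    have h := S1_succ (z - 1)
    have e1 : z - 1 + 1 = z := by ring
    have e2 : (1 : ℂ) + (z - 1) = z := by ring
    rw [e1, e2] at h
    exact h
  have A1 : HasDerivAt (fun y : ℂ => (y - 1) / 2 * (Real.log (2 * Real.pi) : ℂ))
      ((1 : ℂ) / 2 * (Real.log (2 * Real.pi) : ℂ)) z :=
    (((hasDerivAt_id z).sub_const 1).div_const 2).mul_const _
  have A2 : HasDerivAt (fun y : ℂ => y * (y - 1) / 2) ((1 * (z - 1) + z * 1) / 2) z :=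
    ((hasDerivAt_id z).mul ((hasDerivAt_id z).sub_const 1)).div_const 2
  have A3 : HasDerivAt (fun y : ℂ => (y - 1) * logGammaP y)
      (1 * logGammaP z + (z - 1) * (-(Real.eulerMascheroniConstant : ℂ) - z⁻¹ + S1 z)) z :=
    ((hasDerivAt_id z).sub_const 1).mul h1
  have A4 : HasDerivAt (fun y : ℂ => clogBarnesG1p (y - 1))
      (((Real.log (2 * Real.pi) : ℂ) / 2
        - (1 + 2 * (z - 1) * (1 + (Real.eulerMascheroniConstant : ℂ))) / 2
        + (z - 1) * S1 (z - 1)) * 1) z :=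
    HasDerivAt.comp (h := fun y : ℂ => y - 1) z h2 ((hasDerivAt_id z).sub_const 1)
  have H := ((A1.sub A2).add A3).sub A4
  have H2 : HasDerivAt Fa
      ((1 : ℂ) / 2 * (Real.log (2 * Real.pi) : ℂ) - (1 * (z - 1) + z * 1) / 2
        + (1 * logGammaP z + (z - 1) * (-(Real.eulerMascheroniConstant : ℂ) - z⁻¹ + S1 z))
        - ((Real.log (2 * Real.pi) : ℂ) / 2
          - (1 + 2 * (z - 1) * (1 + (Real.eulerMascheroniConstant : ℂ))) / 2
          + (z - 1) * S1 (z - 1)) * 1) z := H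
  convert H2 using 1
  rw [hS]
  ring

end LogGammaAux

open LogGammaAux in
/-- the integral of log-Gamma along the segment from `1` to `z`. -/
theorem logGamma_integral_identity (z : ℂ) (hz : z ∈ Complex.slitPlane) :
    (∀ t ∈ Set.Icc (0 : ℝ) 1, 1 + (t : ℂ) * (z - 1) ∈ Complex.slitPlane) ∧
    (z - 1) * ∫ t in (0 : ℝ)..1, logGammaP (1 + (t : ℂ) * (z - 1)) =
      (z - 1) / 2 * (Real.log (2 * Real.pi) : ℂ) - z * (z - 1) / 2 +
        (z - 1) * logGammaP z - clogBarnesG1p (z - 1) := by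
  have hseg : ∀ t ∈ Set.Icc (0 : ℝ) 1, 1 + (t : ℂ) * (z - 1) ∈ Complex.slitPlane := by
    intro t ht
    have hz' : (1 : ℂ) + (z - 1) ∈ Complex.slitPlane := by
      have e : (1 : ℂ) + (z - 1) = z := by ring
      rwa [e]
    have h := starConvex_one_slitPlane.add_smul_mem hz' ht.1 ht.2
    rwa [Complex.real_smul] at h
  refine ⟨hseg, ?_⟩
  have hderiv : ∀ t ∈ Set.uIcc (0 : ℝ) 1,
      HasDerivAt (fun s : ℝ => Fa (1 + (s : ℂ) * (z - 1)))
        ((z - 1) * logGammaP (1 + (t : ℂ) * (z - 1))) t := by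
    intro t ht
    rw [Set.uIcc_of_le zero_le_one] at ht
    have haff : HasDerivAt (fun s : ℂ => 1 + s * (z - 1)) (z - 1) (t : ℂ) := by
      simpa using ((hasDerivAt_id (t : ℂ)).mul_const (z - 1)).const_add 1
    have hc := (hasDerivAt_Fa (hseg t ht)).comp (t : ℂ) haff
    have hcr := hc.comp_ofReal
    have hcr2 : HasDerivAt (fun s : ℝ => Fa (1 + (s : ℂ) * (z - 1)))
        (logGammaP (1 + (t : ℂ) * (z - 1)) * (z - 1)) t := hcr
    rw [mul_comm] at hcr2
    exact hcr2
  have hint : IntervalIntegrable (fun t : ℝ => (z - 1) * logGammaP (1 + (t : ℂ) * (z - 1)))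
      MeasureTheory.volume 0 1 := by
    apply ContinuousOn.intervalIntegrable
    rw [Set.uIcc_of_le zero_le_one]
    intro t ht
    have h1 : ContinuousAt logGammaP (1 + (t : ℂ) * (z - 1)) :=
      (hasDerivAt_logGammaP (hseg t ht)).differentiableAt.continuousAt
    have h2 : ContinuousAt (fun s : ℝ => 1 + (s : ℂ) * (z - 1)) t := by fun_prop
    have h3 : ContinuousAt (fun s : ℝ => logGammaP (1 + (s : ℂ) * (z - 1))) t :=
      ContinuousAt.comp (g := logGammaP) (f := fun s : ℝ => 1 + (s : ℂ) * (z - 1)) h1 h2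
    exact (continuousAt_const.mul h3).continuousWithinAt
  have hFTC := intervalIntegral.integral_eq_sub_of_hasDerivAt hderiv hint
  have e1 : (1 : ℂ) + ((1 : ℝ) : ℂ) * (z - 1) = z := by push_cast; ring
  have e0 : (1 : ℂ) + ((0 : ℝ) : ℂ) * (z - 1) = 1 := by push_cast; ring
  rw [e1, e0] at hFTC
  have hFa1 : Fa 1 = 0 := by
    have hB0 : clogBarnesG1p 0 = 0 := by
      simp [clogBarnesG1p, Complex.log_one]
    simp [Fa, hB0]
  rw [hFa1, sub_zero] at hFTC
  calc (z - 1) * ∫ t in (0 : ℝ)..1, logGammaP (1 + (t : ℂ) * (z - 1))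
      = ∫ t in (0 : ℝ)..1, (z - 1) * logGammaP (1 + (t : ℂ) * (z - 1)) :=
        (intervalIntegral.integral_const_mul _ _).symm
    _ = Fa z := hFTC
    _ = (z - 1) / 2 * (Real.log (2 * Real.pi) : ℂ) - z * (z - 1) / 2 +
        (z - 1) * logGammaP z - clogBarnesG1p (z - 1) := rfl
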